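/- arXiv:2108.03610 — 2 statements merged into one kernel-verified Lean document; each statement's English description precedes it below -/
import Mathlib

section
/- Let X be a topological space and x ∈ X. The following statements are equivalent: (1) X is homotopically path Hausdorff relative to the trivial subgroup of π₁(X, x); (2) π₁^qs(X, x) = 1; (3) for every loop f at x and every loop g at x, if f is homotopically close to g rel ∂I, then [f] = [g]; (4) for every loop f at x and loops g₁, g₂ at x, if f is homotopically close to g₁ rel ∂I and f is homotopically close to g₂ rel ∂I, then [g₁] = [g₂]. -/
open unitInterval

noncomputable section

attribute [local instance] Path.Homotopic.setoid

variable {X Y : Type*} [TopologicalSpace X] [TopologicalSpace Y]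

/-- `HClose f g` : the path `f` is homotopically close to the path `g` rel `∂I`:
for every partition `0 = t₀ < t₁ < ⋯ < tₙ = 1` and every sequence of open sets
`U₁, …, Uₙ` with `g [tᵢ₋₁, tᵢ] ⊆ Uᵢ`, there is a path `γ`, homotopic to `f` rel `∂I`,
with `γ [tᵢ₋₁, tᵢ] ⊆ Uᵢ` and `γ tᵢ = g tᵢ` for all `i`. -/
def HClose {a b : X} (f g : Path a b) : Prop :=
  ∀ (n : ℕ) (t : Fin (n + 1) → I), t 0 = 0 → t (Fin.last n) = 1 → StrictMono t →
    ∀ U : Fin n → Set X, (∀ i, IsOpen (U i)) →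
      (∀ i : Fin n, g '' Set.Icc (t i.castSucc) (t i.succ) ⊆ U i) →
      ∃ γ : Path a b,
        (∀ i : Fin n, γ '' Set.Icc (t i.castSucc) (t i.succ) ⊆ U i) ∧
        (∀ i : Fin (n + 1), γ (t i) = g (t i)) ∧ γ.Homotopic f

/-- The class of a loop at `x` as an element of the fundamental group. -/
def pathClass {x : X} (f : Path x x) : FundamentalGroup X x :=
  FundamentalGroup.fromPath (⟦f⟧ : Path.Homotopic.Quotient x x)

/-- The `H`-quasi-small loop set `π_H^qs(X, x)`. -/
def qsSet (x : X) (H : Set (FundamentalGroup X x)) : Set (FundamentalGroup X x) :=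
  { p | ∃ f h : Path x x, pathClass f = p ∧ pathClass h ∈ H ∧ HClose f h }

/-- The quasi-small loop group `π₁^qs(X, x)`. -/
def qs (x : X) : Set (FundamentalGroup X x) :=
  qsSet x (⊥ : Subgroup (FundamentalGroup X x))

/-- The Spanier group of `(X, x)` with respect to the cover `𝒰`. -/
def spanierCover (x : X) (𝒰 : Set (Set X)) : Subgroup (FundamentalGroup X x) :=
  Subgroup.closure { p | ∃ (y : X) (u : Path x y) (v : Path y y) (U : Set X),
    U ∈ 𝒰 ∧ Set.range v ⊆ U ∧ p = pathClass ((u.trans v).trans u.symm) }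

/-- The (unbased) Spanier group `π₁^sp(X, x)`. -/
def spanierGroup (x : X) : Subgroup (FundamentalGroup X x) :=
  ⨅ (𝒰 : Set (Set X)) (_ : ∀ U ∈ 𝒰, IsOpen U) (_ : ⋃₀ 𝒰 = Set.univ), spanierCover x 𝒰

/-- The small generated subgroup `π₁^sg(X, x)`. -/
def smallGenerated (x : X) : Subgroup (FundamentalGroup X x) :=
  Subgroup.closure { p | ∃ (y : X) (β : Path x y) (α : Path y y),
    HClose α (Path.refl y) ∧ p = pathClass ((β.trans α).trans β.symm) }

/-- `X` is homotopically path Hausdorff relative to `H ⊆ π₁(X, x)`. -/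
def HPHausdorffRel (x : X) (H : Set (FundamentalGroup X x)) : Prop :=
  ∀ (y : X) (α β : Path x y), pathClass (α.trans β.symm) ∉ H →
    ∃ (n : ℕ) (t : Fin (n + 1) → I), t 0 = 0 ∧ t (Fin.last n) = 1 ∧ StrictMono t ∧
      ∃ U : Fin n → Set X, (∀ i, IsOpen (U i)) ∧
        (∀ i : Fin n, α '' Set.Icc (t i.castSucc) (t i.succ) ⊆ U i) ∧
        ∀ γ : Path x y, (∀ i : Fin n, γ '' Set.Icc (t i.castSucc) (t i.succ) ⊆ U i) →
          (∀ i : Fin (n + 1), γ (t i) = α (t i)) → pathClass (γ.trans β.symm) ∉ H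


lemma pathClass_eq_iff {x : X} {f g : Path x x} : pathClass f = pathClass g ↔ f.Homotopic g := by
  unfold pathClass
  show (⟦f⟧ : Path.Homotopic.Quotient x x) = ⟦g⟧ ↔ _
  rw [Quotient.eq]
  rfl

lemma one_eq_pathClass_refl {x : X} : (1 : FundamentalGroup X x) = pathClass (Path.refl x) := by
  rfl

lemma pathClass_eq_one_iff {x : X} {f : Path x x} :
    pathClass f = 1 ↔ f.Homotopic (Path.refl x) := by
  rw [one_eq_pathClass_refl, pathClass_eq_iff]

lemma trans_symm_homotopic_refl_iff {x y : X} (f g : Path x y) :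
    (f.trans g.symm).Homotopic (Path.refl x) ↔ f.Homotopic g := by
  constructor
  · intro h
    have h1 : f.Homotopic (f.trans (Path.refl y)) := ⟨(Path.Homotopy.transRefl f).symm⟩
    have h2 : (f.trans (Path.refl y)).Homotopic (f.trans (g.symm.trans g)) :=
      Path.Homotopic.hcomp (Path.Homotopic.refl f) ⟨Path.Homotopy.reflSymmTrans g⟩
    have h3 : (f.trans (g.symm.trans g)).Homotopic ((f.trans g.symm).trans g) :=
      ⟨(Path.Homotopy.transAssoc f g.symm g).symm⟩
    have h4 : ((f.trans g.symm).trans g).Homotopic ((Path.refl x).trans g) :=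
      Path.Homotopic.hcomp h (Path.Homotopic.refl g)
    have h5 : ((Path.refl x).trans g).Homotopic g := ⟨Path.Homotopy.reflTrans g⟩
    exact ((((h1.trans h2).trans h3).trans h4).trans h5)
  · intro h
    have h1 : (f.trans g.symm).Homotopic (g.trans g.symm) :=
      Path.Homotopic.hcomp h (Path.Homotopic.refl g.symm)
    exact h1.trans ⟨(Path.Homotopy.reflTransSymm g).symm⟩

lemma hclose_rfl {a b : X} (f : Path a b) : HClose f f := by
  intro n t h0 h1 hm U hop hsub
  exact ⟨f, hsub, fun i => rfl, Path.Homotopic.refl f⟩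


lemma trans_apply_extend {a b c : X} (p : Path a b) (q : Path b c) (u : I) :
    (p.trans q) u = if (u:ℝ) ≤ 1/2 then p.extend (2*u) else q.extend (2*u-1) := rfl

lemma HClose.trans_right {a b c : X} {f g : Path a b} (hc : HClose f g) (h : Path b c) :
    HClose (f.trans h) (g.trans h) := by
  intro n t h0 h1 hmono U hop hsub
  classical
  set F : Finset (Fin (n+1)) := Finset.univ.filter (fun i => (t i : ℝ) < 1/2) with hF
  have h0F : (0 : Fin (n+1)) ∈ F := by
    rw [hF, Finset.mem_filter]
    refine ⟨Finset.mem_univ _, ?_⟩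
    rw [h0]
    norm_num
  have hne : F.Nonempty := ⟨0, h0F⟩
  set k : Fin (n+1) := F.max' hne with hk
  have hkmem : (t k : ℝ) < 1/2 := by
    have hx : k ∈ F := F.max'_mem hne
    exact (Finset.mem_filter.mp hx).2
  have hle : ∀ i : Fin (n+1), (t i : ℝ) < 1/2 → i ≤ k := fun i hi =>
    F.le_max' i (by rw [hF, Finset.mem_filter]; exact ⟨Finset.mem_univ _, hi⟩)
  have hklt : (k : ℕ) < n := by
    by_contra hcon
    have hkl : k = Fin.last n := Fin.ext (le_antisymm (Nat.lt_succ_iff.mp k.isLt) (not_lt.mp hcon))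
    rw [hkl, h1] at hkmem
    norm_num at hkmem
  set m : ℕ := (k : ℕ) with hm
  set t' : ℕ → I := fun j => t ⟨min j n, Nat.lt_succ_of_le (min_le_right j n)⟩ with ht'
  have htt' : ∀ j : ℕ, j ≤ n → ∀ (hlt : j < n + 1), t' j = t ⟨j, hlt⟩ := by
    intro j hj hlt
    exact congrArg t (Fin.ext (by simp [ht', min_eq_left hj]))
  have ht'lt : ∀ j : ℕ, j ≤ m → (t' j : ℝ) < 1/2 := by
    intro j hj
    have hjk : (⟨min j n, Nat.lt_succ_of_le (min_le_right j n)⟩ : Fin (n+1)) ≤ k := by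
      rw [Fin.le_def]
      exact le_trans (min_le_left j n) (hm ▸ hj)
    exact lt_of_le_of_lt (show (t' j : ℝ) ≤ (t k : ℝ) from hmono.monotone hjk) hkmem
  have ht'nonneg : ∀ j : ℕ, (0:ℝ) ≤ t' j := fun j => (t' j).2.1
  set s : Fin (m+2) → I := fun j =>
    if (j:ℕ) ≤ m then Set.projIcc 0 1 zero_le_one (2 * (t' (j:ℕ) : ℝ)) else 1 with hs
  have hsv : ∀ j : Fin (m+2), (j:ℕ) ≤ m → (s j : ℝ) = 2 * (t' (j:ℕ) : ℝ) := by
    intro j hj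
    have hmem : (2 * (t' (j:ℕ) : ℝ)) ∈ Set.Icc (0:ℝ) 1 := by
      constructor
      · linarith [ht'nonneg (j:ℕ)]
      · nlinarith [ht'lt (j:ℕ) hj]
    rw [hs]
    simp only [hj, if_pos]
    rw [Set.projIcc_of_mem zero_le_one hmem]
  have hsv' : ∀ j : Fin (m+2), ¬ (j:ℕ) ≤ m → s j = 1 := by
    intro j hj
    rw [hs]
    simp only [hj, if_neg, if_false]
  have hs0 : s 0 = 0 := by
    apply Subtype.ext
    have h00 : ((0 : Fin (m+2)) : ℕ) = 0 := rfl
    rw [hsv 0 (by omega)]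
    rw [h00, htt' 0 (by omega) (by omega), show (⟨0, by omega⟩ : Fin (n+1)) = 0 from Fin.ext (by simp)]
    rw [h0]
    norm_num
  have hslast : s (Fin.last (m+1)) = 1 := hsv' _ (by rw [Fin.val_last]; omega)
  have hsmono : StrictMono s := by
    intro j1 j2 hlt
    rw [← Subtype.coe_lt_coe]
    have hltv : (j1:ℕ) < (j2:ℕ) := hlt
    by_cases hj2 : (j2:ℕ) ≤ m
    · have hj1 : (j1:ℕ) ≤ m := by omega
      rw [hsv j1 hj1, hsv j2 hj2]
      have hlt' : (⟨min (j1:ℕ) n, Nat.lt_succ_of_le (min_le_right _ n)⟩ : Fin (n+1)) <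
          ⟨min (j2:ℕ) n, Nat.lt_succ_of_le (min_le_right _ n)⟩ := by
        rw [Fin.lt_def]
        simp only
        omega
      have hr : (t' (j1:ℕ) : ℝ) < (t' (j2:ℕ) : ℝ) := hmono hlt'
      linarith
    · have hj1 : (j1:ℕ) ≤ m := by
        have := j2.isLt
        omega
      rw [hsv j1 hj1, hsv' j2 hj2]
      have := ht'lt (j1:ℕ) hj1
      rw [show ((1:I):ℝ) = 1 from rfl]
      linarith
  set V : Fin (m+1) → Set X := fun j => U ⟨(j:ℕ), by omega⟩ with hV
  have hVopen : ∀ j, IsOpen (V j) := fun j => hop _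
  have hksucc : (1:ℝ)/2 ≤ (t ⟨m+1, by omega⟩ : ℝ) := by
    by_contra hcon
    have hx := hle ⟨m+1, by omega⟩ (by linarith)
    rw [Fin.le_def] at hx
    simp only at hx
    omega
  have hgV : ∀ j : Fin (m+1), g '' Set.Icc (s j.castSucc) (s j.succ) ⊆ V j := by
    intro j z hz
    obtain ⟨u, hu, rfl⟩ := hz
    have hjm : (j:ℕ) ≤ m := by omega
    set i : Fin n := ⟨(j:ℕ), by omega⟩ with hi
    set w : I := ⟨(u:ℝ)/2, ⟨by linarith [u.2.1], by linarith [u.2.2]⟩⟩ with hw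
    have hwhalf : (w:ℝ) ≤ 1/2 := by
      show (u:ℝ)/2 ≤ 1/2
      linarith [u.2.2]
    have hwv : (g.trans h) w = g u := by
      rw [trans_apply_extend, if_pos hwhalf]
      have h2w : 2 * (w:ℝ) = (u:ℝ) := by
        show 2 * ((u:ℝ)/2) = (u:ℝ)
        ring
      rw [h2w, Path.extend_apply g u.2]
    -- lower bound value
    have hcs : (s j.castSucc : ℝ) = 2 * (t' (j:ℕ) : ℝ) := by
      have := hsv j.castSucc (by rw [Fin.coe_castSucc]; omega)
      rwa [Fin.coe_castSucc] at this
    have htcs : t i.castSucc = t' (j:ℕ) := by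
      rw [htt' (j:ℕ) (by omega) (by omega)]
      exact congrArg t (Fin.ext (by simp [hi]))
    have hwmem : w ∈ Set.Icc (t i.castSucc) (t i.succ) := by
      constructor
      · rw [← Subtype.coe_le_coe, htcs]
        have h1' : (s j.castSucc : ℝ) ≤ (u:ℝ) := hu.1
        show (t' (j:ℕ) : ℝ) ≤ (u:ℝ)/2
        rw [hcs] at h1'
        linarith
      · rw [← Subtype.coe_le_coe]
        have hts : t i.succ = t ⟨(j:ℕ)+1, by omega⟩ := congrArg t (Fin.ext (by simp [hi]))
        rw [hts]
        show (u:ℝ)/2 ≤ _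
        by_cases hjm' : (j:ℕ) < m
        · have hss : (s j.succ : ℝ) = 2 * (t' ((j:ℕ)+1) : ℝ) := by
            have := hsv j.succ (by rw [Fin.val_succ]; omega)
            rwa [Fin.val_succ] at this
          have h2' : (u:ℝ) ≤ (s j.succ : ℝ) := hu.2
          rw [hss, htt' ((j:ℕ)+1) (by omega) (by omega)] at h2'
          linarith
        · have hjm'' : (j:ℕ) = m := by omega
          have he : (⟨(j:ℕ)+1, by omega⟩ : Fin (n+1)) = ⟨m+1, by omega⟩ := Fin.ext (by simp [hjm''])
          rw [he]
          linarith [u.2.2, hksucc]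
    have hx := hsub i ⟨w, hwmem, rfl⟩
    rw [hwv] at hx
    exact hx
  obtain ⟨γ₀, hγV, hγeq, hγhom⟩ := hc (m+1) s hs0 hslast hsmono V hVopen hgV
  have claim1 : ∀ u : I, (1:ℝ)/2 ≤ (u:ℝ) → (γ₀.trans h) u = (g.trans h) u := by
    intro u hu
    rw [trans_apply_extend, trans_apply_extend]
    by_cases h2 : (u:ℝ) ≤ 1/2
    · rw [if_pos h2, if_pos h2]
      have he : 2 * (u:ℝ) = 1 := by linarith
      rw [he, Path.extend_one, Path.extend_one]
    · rw [if_neg h2, if_neg h2]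
  refine ⟨γ₀.trans h, ?_, ?_, Path.Homotopic.hcomp hγhom (Path.Homotopic.refl h)⟩
  · intro i z hz
    obtain ⟨u, hu, rfl⟩ := hz
    by_cases hu2 : (1:ℝ)/2 ≤ (u:ℝ)
    · rw [claim1 u hu2]
      exact hsub i ⟨u, hu, rfl⟩
    · push_neg at hu2
      have hu1' : (t i.castSucc : ℝ) ≤ (u : ℝ) := hu.1
      have hik : i.castSucc ≤ k := hle i.castSucc (by linarith)
      have him : (i:ℕ) ≤ m := by
        rw [Fin.le_def, Fin.coe_castSucc] at hik
        omega
      set j : Fin (m+1) := ⟨(i:ℕ), by omega⟩ with hj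
      set w : I := ⟨2*(u:ℝ), ⟨by linarith [u.2.1], by linarith⟩⟩ with hw
      have hval : (γ₀.trans h) u = γ₀ w := by
        rw [trans_apply_extend, if_pos (le_of_lt hu2)]
        exact Path.extend_apply γ₀ w.2
      have hcs : (s j.castSucc : ℝ) = 2 * (t' (i:ℕ) : ℝ) := by
        have := hsv j.castSucc (by rw [Fin.coe_castSucc]; exact him)
        rwa [Fin.coe_castSucc] at this
      have htcs : t' (i:ℕ) = t i.castSucc := by
        rw [htt' (i:ℕ) (by omega) (by omega)]
        exact congrArg t (Fin.ext (by simp))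
      have hwmem : w ∈ Set.Icc (s j.castSucc) (s j.succ) := by
        constructor
        · rw [← Subtype.coe_le_coe, hcs, htcs]
          show _ ≤ 2*(u:ℝ)
          linarith
        · rw [← Subtype.coe_le_coe]
          show 2*(u:ℝ) ≤ _
          by_cases him' : (i:ℕ) < m
          · have hss : (s j.succ : ℝ) = 2 * (t' ((i:ℕ)+1) : ℝ) := by
              have := hsv j.succ (by rw [Fin.val_succ]; show (i:ℕ)+1 ≤ m; omega)
              rwa [Fin.val_succ] at this
            have hts : t' ((i:ℕ)+1) = t i.succ := by
              rw [htt' ((i:ℕ)+1) (by omega) (by omega)]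
              exact congrArg t (Fin.ext (by simp))
            have hu2' : (u:ℝ) ≤ (t i.succ : ℝ) := hu.2
            rw [hss, hts]
            linarith
          · have hns : ¬ ((j.succ : ℕ) ≤ m) := by
              rw [Fin.val_succ]
              show ¬ ((i:ℕ)+1 ≤ m)
              omega
            rw [hsv' j.succ hns]
            rw [show ((1:I):ℝ) = 1 from rfl]
            linarith
      have hx := hγV j ⟨w, hwmem, rfl⟩
      rw [hval]
      exact hx
  · intro i
    by_cases hi2 : (1:ℝ)/2 ≤ (t i : ℝ)
    · exact claim1 (t i) hi2
    · push_neg at hi2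
      have hik : i ≤ k := hle i hi2
      have him : (i:ℕ) ≤ m := by rw [Fin.le_def] at hik; omega
      set j : Fin (m+2) := ⟨(i:ℕ), by omega⟩ with hj
      have hsj : (s j : ℝ) = 2 * (t i : ℝ) := by
        rw [hsv j him]
        have heq : t' ((j:ℕ)) = t i := htt' (j:ℕ) (by omega) (by omega)
        rw [heq]
      have e1 : (γ₀.trans h) (t i) = γ₀ (s j) := by
        rw [trans_apply_extend, if_pos (le_of_lt hi2)]
        rw [show (2:ℝ) * (t i : ℝ) = (s j : ℝ) from hsj.symm]
        exact Path.extend_extends' γ₀ (s j)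
      have e2 : (g.trans h) (t i) = g (s j) := by
        rw [trans_apply_extend, if_pos (le_of_lt hi2)]
        rw [show (2:ℝ) * (t i : ℝ) = (s j : ℝ) from hsj.symm]
        exact Path.extend_extends' g (s j)
      rw [e1, e2, hγeq j]

/-- the following are equivalent: (1) `X` is homotopically path
Hausdorff relative to the trivial subgroup; (2) `π₁^qs(X, x) = 1`; (3) any loop at
`x` homotopically close to a loop `g` is homotopic to `g`; (4) if a loop at `x` is
homotopically close to two loops `g₁, g₂`, then `[g₁] = [g₂]`. -/
theorem stmt17 (x : X) :
    (HPHausdorffRel x ((⊥ : Subgroup (FundamentalGroup X x)) : Set (FundamentalGroup X x)) ↔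
      qs x = {(1 : FundamentalGroup X x)}) ∧
    (qs x = {(1 : FundamentalGroup X x)} ↔
      ∀ f g : Path x x, HClose f g → f.Homotopic g) ∧
    ((∀ f g : Path x x, HClose f g → f.Homotopic g) ↔
      ∀ f g₁ g₂ : Path x x, HClose f g₁ → HClose f g₂ → g₁.Homotopic g₂) := by
  classical
  have h13 : HPHausdorffRel x ((⊥ : Subgroup (FundamentalGroup X x)) : Set (FundamentalGroup X x)) →
      ∀ f g : Path x x, HClose f g → f.Homotopic g := by
    intro H1 f g hcl
    by_contra hne
    have hnot : pathClass (g.trans f.symm) ∉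
        ((⊥ : Subgroup (FundamentalGroup X x)) : Set (FundamentalGroup X x)) := by
      intro hmem
      rw [SetLike.mem_coe, Subgroup.mem_bot, pathClass_eq_one_iff] at hmem
      exact hne ((trans_symm_homotopic_refl_iff g f).mp hmem).symm
    obtain ⟨n, t, h0, h1, hmono, U, hop, hsubg, hforall⟩ := H1 x g f hnot
    obtain ⟨γ, hγ1, hγ2, hγ3⟩ := hcl n t h0 h1 hmono U hop hsubg
    refine hforall γ hγ1 hγ2 ?_
    rw [SetLike.mem_coe, Subgroup.mem_bot, pathClass_eq_one_iff]
    exact (trans_symm_homotopic_refl_iff γ f).mpr hγ3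
  have h32 : (∀ f g : Path x x, HClose f g → f.Homotopic g) →
      qs x = {(1 : FundamentalGroup X x)} := by
    intro H3
    ext p
    simp only [Set.mem_singleton_iff]
    constructor
    · rintro ⟨f, hh, rfl, hmem, hcl⟩
      rw [SetLike.mem_coe, Subgroup.mem_bot, pathClass_eq_one_iff] at hmem
      rw [pathClass_eq_one_iff]
      exact (H3 f hh hcl).trans hmem
    · rintro rfl
      refine ⟨Path.refl x, Path.refl x, one_eq_pathClass_refl.symm, ?_, hclose_rfl _⟩
      rw [SetLike.mem_coe, Subgroup.mem_bot]
      exact one_eq_pathClass_refl.symm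
  have h21 : qs x = {(1 : FundamentalGroup X x)} →
      HPHausdorffRel x ((⊥ : Subgroup (FundamentalGroup X x)) : Set (FundamentalGroup X x)) := by
    intro H2 y α β hne
    by_contra hcon
    push_neg at hcon
    have hcl : HClose β α := by
      intro n t h0 h1 hmono U hop hsubα
      obtain ⟨γ, hγ1, hγ2, hγmem⟩ := hcon n t h0 h1 hmono U hop hsubα
      refine ⟨γ, hγ1, hγ2, ?_⟩
      rw [SetLike.mem_coe, Subgroup.mem_bot, pathClass_eq_one_iff] at hγmem
      exact (trans_symm_homotopic_refl_iff γ β).mp hγmem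
    have hclose2 : HClose (β.trans α.symm) (α.trans α.symm) := hcl.trans_right α.symm
    have hmem : pathClass (β.trans α.symm) ∈ qs x := by
      refine ⟨β.trans α.symm, α.trans α.symm, rfl, ?_, hclose2⟩
      rw [SetLike.mem_coe, Subgroup.mem_bot, pathClass_eq_one_iff]
      exact (trans_symm_homotopic_refl_iff α α).mpr (Path.Homotopic.refl α)
    rw [H2, Set.mem_singleton_iff, pathClass_eq_one_iff] at hmem
    refine hne ?_
    rw [SetLike.mem_coe, Subgroup.mem_bot, pathClass_eq_one_iff]
    exact (trans_symm_homotopic_refl_iff α β).mpr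
      ((trans_symm_homotopic_refl_iff β α).mp hmem).symm
  refine ⟨⟨fun H1 => h32 (h13 H1), h21⟩, ⟨fun H2 => h13 (h21 H2), h32⟩, ?_⟩
  constructor
  · intro H3 f g₁ g₂ hc1 hc2
    exact (H3 f g₁ hc1).symm.trans (H3 f g₂ hc2)
  · intro H4 f g hcl
    exact H4 f f g (hclose_rfl f) hcl
end
end

section
/- Let X be a locally path-connected topological space and let f, g be paths in X with f(0) = g(0) and f(1) = g(1). Suppose that for every partition 0 = t₀ < t₁ < ⋯ < t_n = 1 and every sequence of open sets U₁, …, U_n with g([t_{i-1}, t_i]) ⊆ U_i for all i, there exists a path f' homotopic to f rel ∂I with f'([t_{i-1}, t_i]) ⊆ U_i for 1 ≤ i ≤ n. Then f is homotopically close to g rel ∂I (i.e., one can additionally require the approximating path γ to satisfy γ(t_i) = g(t_i) for 0 ≤ i ≤ n). -/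
open unitInterval

noncomputable section

attribute [local instance] Path.Homotopic.setoid

variable {X Y : Type*} [TopologicalSpace X] [TopologicalSpace Y]

set_option maxHeartbeats 1600000 in
lemma my_detour {X : Type*} [TopologicalSpace X] {a b c : X} (γ : Path a b)
    (l u r : I) (hlu : l < u) (hur : u < r) (δ : Path (γ u) c) :
    ∃ γ' : Path a b, γ'.Homotopic γ ∧ γ' u = c ∧
      (∀ s : I, (s ≤ l ∨ r ≤ s) → γ' s = γ s) ∧
      (⇑γ' '' Set.Icc l u ⊆ ⇑γ '' Set.Icc l u ∪ Set.range δ) ∧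
      (⇑γ' '' Set.Icc u r ⊆ ⇑γ '' Set.Icc u r ∪ Set.range δ) := by
  classical
  set L : ℝ := (l : ℝ) with hL
  set U : ℝ := (u : ℝ) with hU
  set R : ℝ := (r : ℝ) with hR
  have hLU : L < U := hlu
  have hUR : U < R := hur
  have h0L : (0:ℝ) ≤ L := l.2.1
  have hR1 : R ≤ 1 := r.2.2
  have hU1 : U ≤ 1 := u.2.2
  have h0U : (0:ℝ) ≤ U := u.2.1
  set m1 : ℝ := (L + U) / 2 with hm1
  set m2 : ℝ := (U + R) / 2 with hm2
  have hLm1 : L < m1 := by rw [hm1]; linarith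
  have hm1U : m1 < U := by rw [hm1]; linarith
  have hUm2 : U < m2 := by rw [hm2]; linarith
  have hm2R : m2 < R := by rw [hm2]; linarith
  have hγu : γ.extend U = γ u := γ.extend_extends' u
  have hδ0 : δ.extend 0 = γ u := by simp
  have hd1 : U - m1 ≠ 0 := by linarith
  have hd2 : m2 - U ≠ 0 := by linarith
  have he2 : L + 2 * (m1 - L) = U := by rw [hm1]; ring
  have he5 : R + 2 * (m2 - R) = U := by rw [hm2]; ring
  -- the homotopy as a function of real parameters
  set HH : ℝ → ℝ → X := fun τ s =>
    if s ≤ L then γ.extend s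
    else if s ≤ m1 then γ.extend (L + 2 * (s - L))
    else if s ≤ U then δ.extend (τ * ((s - m1) / (U - m1)))
    else if s ≤ m2 then δ.extend (τ * ((m2 - s) / (m2 - U)))
    else if s ≤ R then γ.extend (R + 2 * (s - R))
    else γ.extend s with hHHdef
  have contHH : Continuous fun p : ℝ × ℝ => HH p.1 p.2 := by
    rw [hHHdef]
    apply Continuous.if_le (by fun_prop : Continuous fun p : ℝ × ℝ => γ.extend p.2) ?_
      continuous_snd continuous_const ?_
    rotate_left
    · intro x hx
      simp only [hx, if_pos hLm1.le, sub_self, mul_zero, add_zero]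
    apply Continuous.if_le
      (by fun_prop : Continuous fun p : ℝ × ℝ => γ.extend (L + 2 * (p.2 - L))) ?_
      continuous_snd continuous_const ?_
    rotate_left
    · intro x hx
      simp only [hx, if_pos hm1U.le, he2, sub_self, zero_div, mul_zero, hδ0, hγu]
    apply Continuous.if_le
      (by fun_prop : Continuous fun p : ℝ × ℝ => δ.extend (p.1 * ((p.2 - m1) / (U - m1)))) ?_
      continuous_snd continuous_const ?_
    rotate_left
    · intro x hx
      simp only [hx, if_pos hUm2.le, div_self hd1, div_self hd2]
    apply Continuous.if_le
      (by fun_prop : Continuous fun p : ℝ × ℝ => δ.extend (p.1 * ((m2 - p.2) / (m2 - U)))) ?_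
      continuous_snd continuous_const ?_
    rotate_left
    · intro x hx
      simp only [hx, if_pos hm2R.le, he5, sub_self, zero_div, mul_zero, hδ0, hγu]
    apply Continuous.if_le
      (by fun_prop : Continuous fun p : ℝ × ℝ => γ.extend (R + 2 * (p.2 - R)))
      (by fun_prop : Continuous fun p : ℝ × ℝ => γ.extend p.2)
      continuous_snd continuous_const ?_
    intro x hx
    simp only [hx, sub_self, mul_zero, add_zero]
  -- the reparametrisation
  set ψ : ℝ → ℝ := fun s =>
    if s ≤ L then s
    else if s ≤ m1 then L + 2 * (s - L)
    else if s ≤ U then U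
    else if s ≤ m2 then U
    else if s ≤ R then R + 2 * (s - R)
    else s with hψdef
  have hψcont : Continuous ψ := by
    rw [hψdef]
    apply Continuous.if_le continuous_id ?_ continuous_id continuous_const ?_
    rotate_left
    · intro x hx
      replace hx : x = L := hx
      simp only [id_eq]
      rw [hx, if_pos hLm1.le]
      ring
    apply Continuous.if_le (by fun_prop) ?_ continuous_id continuous_const ?_
    rotate_left
    · intro x hx
      replace hx : x = m1 := hx
      rw [hx, if_pos hm1U.le, he2]
    apply Continuous.if_le continuous_const ?_ continuous_id continuous_const ?_
    rotate_left
    · intro x hx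
      replace hx : x = U := hx
      rw [hx, if_pos hUm2.le]
    apply Continuous.if_le continuous_const ?_ continuous_id continuous_const ?_
    rotate_left
    · intro x hx
      replace hx : x = m2 := hx
      rw [hx, if_pos hm2R.le, he5]
    apply Continuous.if_le (by fun_prop) continuous_id continuous_id continuous_const ?_
    intro x hx
    replace hx : x = R := hx
    simp only [id_eq]
    rw [hx]
    ring
  have hψI : ∀ s : I, ψ (s : ℝ) ∈ I := by
    intro s
    have h1 := s.2.1
    have h2 := s.2.2
    simp only [hψdef, Set.mem_Icc]
    split_ifs <;> constructor <;> linarith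
  set φ : I → I := fun s => ⟨ψ (s : ℝ), hψI s⟩ with hφdef
  have hφcont : Continuous φ := Continuous.subtype_mk (hψcont.comp continuous_subtype_val) _
  have hψ0 : ψ 0 = 0 := by simp only [hψdef, if_pos h0L]
  have hψ1 : ψ 1 = 1 := by
    simp only [hψdef]
    split_ifs <;> linarith
  have hφ0 : φ 0 = 0 := Subtype.ext hψ0
  have hφ1 : φ 1 = 1 := Subtype.ext hψ1
  set pγ : Path a b := γ.reparam φ hφcont hφ0 hφ1 with hpγ
  have homA : γ.Homotopic pγ := ⟨Path.Homotopy.reparam γ φ hφcont hφ0 hφ1⟩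
  -- evaluate HH at τ = 0
  have hHH0 : ∀ s : I, HH 0 (s : ℝ) = pγ s := by
    intro s
    have : pγ s = γ.extend (ψ (s : ℝ)) := by
      rw [hpγ]
      show γ (φ s) = _
      rw [γ.extend_apply (hψI s)]
    rw [this, hHHdef, hψdef]
    simp only
    split_ifs <;> first
      | rfl
      | (rw [zero_mul, hδ0, hγu.symm])
  have hHHb : ∀ τ : ℝ, HH τ 1 = b := by
    intro τ
    rw [hHHdef]
    simp only
    split_ifs with h1 h2 h3 h4 h5
    · exact γ.extend_one
    · linarith
    · linarith
    · linarith
    · have : R = 1 := le_antisymm hR1 h5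
      rw [this, (by ring : (1:ℝ) + 2 * (1 - 1) = 1)]
      exact γ.extend_one
    · exact γ.extend_one
  have hHHa : ∀ τ : ℝ, HH τ 0 = a := by
    intro τ
    rw [hHHdef]
    simp only [if_pos h0L]
    exact γ.extend_zero
  set γ' : Path a b :=
    { toFun := fun s => HH 1 (s : ℝ)
      continuous_toFun := by exact contHH.comp (continuous_const.prodMk continuous_subtype_val)
      source' := hHHa 1
      target' := hHHb 1 } with hγ'def
  have hγ'eval : ∀ s : I, γ' s = HH 1 (s : ℝ) := fun s => rfl
  have FB : Path.Homotopy pγ γ' :=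
    { toFun := fun p => HH (p.1 : ℝ) (p.2 : ℝ)
      continuous_toFun := by exact contHH.comp ((continuous_subtype_val.comp continuous_fst).prodMk (continuous_subtype_val.comp continuous_snd))
      map_zero_left := fun s => hHH0 s
      map_one_left := fun s => rfl
      prop' := by
        intro τ s hs
        simp only [Set.mem_insert_iff, Set.mem_singleton_iff] at hs
        rcases hs with rfl | rfl
        · show HH (τ : ℝ) ((0:I) : ℝ) = pγ 0
          rw [pγ.source]
          exact hHHa τ
        · show HH (τ : ℝ) ((1:I) : ℝ) = pγ 1
          rw [pγ.target]
          exact hHHb τ }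
  have homB : pγ.Homotopic γ' := Nonempty.intro FB
  have hhom : γ'.Homotopic γ := (Path.Homotopic.symm homB).trans (Path.Homotopic.symm homA)
  refine ⟨γ', hhom, ?_, ?_, ?_, ?_⟩
  · -- γ' u = c
    rw [hγ'eval, hHHdef]
    simp only
    rw [if_neg (by push_neg; exact hLU), if_neg (by push_neg; exact hm1U),
      if_pos le_rfl, div_self hd1, mul_one]
    exact δ.extend_one
  · -- equality off (l, r)
    intro s hs
    rw [hγ'eval, hHHdef]
    simp only
    rcases hs with hsl | hsr
    · rw [if_pos (Subtype.coe_le_coe.mpr hsl : (s:ℝ) ≤ L)]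
      exact γ.extend_extends' s
    · have hRs : R ≤ (s : ℝ) := Subtype.coe_le_coe.mpr hsr
      split_ifs with h1 h2 h3 h4 h5
      · linarith
      · linarith
      · linarith
      · linarith
      · have : (s : ℝ) = R := le_antisymm h5 hRs
        rw [this, (by ring : R + 2 * (R - R) = R), ← this]
        exact γ.extend_extends' s
      · exact γ.extend_extends' s
  · -- image on [l, u]
    rintro x ⟨s, hs, rfl⟩
    have hsl : L ≤ (s : ℝ) := Subtype.coe_le_coe.mpr hs.1
    have hsu : (s : ℝ) ≤ U := Subtype.coe_le_coe.mpr hs.2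
    rw [hγ'eval, hHHdef]
    simp only
    split_ifs with h1 h2 h3 h4 h5
    all_goals try exact absurd hsu (by linarith)
    · rw [γ.extend_extends' s]; exact Or.inl ⟨s, hs, rfl⟩
    · have hmem : L + 2 * ((s:ℝ) - L) ∈ I := by
        simp only [Set.mem_Icc]; constructor <;> linarith
      rw [γ.extend_apply hmem]
      refine Or.inl ⟨⟨_, hmem⟩, ⟨?_, ?_⟩, rfl⟩
      · exact Subtype.coe_le_coe.mp (by show L ≤ L + 2 * ((s:ℝ) - L); linarith)
      · exact Subtype.coe_le_coe.mp (by show L + 2 * ((s:ℝ) - L) ≤ U; linarith)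
    · exact Or.inr (δ.extend_range ▸ Set.mem_range_self _)
  · -- image on [u, r]
    rintro x ⟨s, hs, rfl⟩
    have hsu : U ≤ (s : ℝ) := Subtype.coe_le_coe.mpr hs.1
    have hsr : (s : ℝ) ≤ R := Subtype.coe_le_coe.mpr hs.2
    rw [hγ'eval, hHHdef]
    simp only
    split_ifs with h1 h2 h3 h4 h5
    all_goals try exact absurd hsu (by linarith)
    all_goals try exact absurd hsr (by linarith)
    · exact Or.inr (δ.extend_range ▸ Set.mem_range_self _)
    · exact Or.inr (δ.extend_range ▸ Set.mem_range_self _)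
    · have h4' : m2 < (s:ℝ) := by push_neg at h4; exact h4
      have hmem : R + 2 * ((s:ℝ) - R) ∈ I := by
        simp only [Set.mem_Icc]
        constructor <;> linarith
      rw [γ.extend_apply hmem]
      refine Or.inl ⟨⟨_, hmem⟩, ⟨?_, ?_⟩, rfl⟩
      · exact Subtype.coe_le_coe.mp (by show U ≤ R + 2 * ((s:ℝ) - R); linarith)
      · exact Subtype.coe_le_coe.mp (by show R + 2 * ((s:ℝ) - R) ≤ R; linarith)

set_option maxHeartbeats 1600000

/-- in a locally path-connected space, closeness in the sense of Virk
(without the requirement `γ (t i) = g (t i)`) implies homotopical closeness. -/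
theorem stmt18 [LocallyPathConnectedSpace X] {a b : X} (f g : Path a b)
    (h : ∀ (n : ℕ) (t : Fin (n + 1) → I), t 0 = 0 → t (Fin.last n) = 1 → StrictMono t →
      ∀ U : Fin n → Set X, (∀ i, IsOpen (U i)) →
        (∀ i : Fin n, g '' Set.Icc (t i.castSucc) (t i.succ) ⊆ U i) →
        ∃ f' : Path a b, f'.Homotopic f ∧
          ∀ i : Fin n, f' '' Set.Icc (t i.castSucc) (t i.succ) ⊆ U i) :
    HClose f g := by
  intro n t ht0 htlast hmono U hUopen hgU
  rcases Nat.eq_zero_or_pos n with hn0 | hnpos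
  · subst hn0
    exfalso
    have h01 : (0 : I) = 1 := by
      rw [← ht0, ← htlast]
      congr 1
      all_goals exact Fin.ext (by simp)
    exact zero_ne_one h01
  classical
  -- ℕ-indexed versions of the data
  set T : ℕ → I := fun k => if hk : k < n + 1 then t ⟨k, hk⟩ else 1 with hT
  set V : ℕ → Set X := fun k => if hk : k < n then U ⟨k, hk⟩ else Set.univ with hV
  have hTeq : ∀ i : Fin (n + 1), T i.val = t i := by
    intro i
    simp only [hT]
    rw [dif_pos i.isLt]
  have hTcast : ∀ i : Fin n, T i.val = t i.castSucc := by
    intro i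
    simp only [hT]
    rw [dif_pos (by omega : i.val < n + 1)]
    congr 1
    all_goals exact Fin.ext (by simp)
  have hTsucc : ∀ i : Fin n, T (i.val + 1) = t i.succ := by
    intro i
    simp only [hT]
    rw [dif_pos (by omega : i.val + 1 < n + 1)]
    congr 1
    all_goals exact Fin.ext (by simp)
  have hVeq : ∀ i : Fin n, V i.val = U i := by
    intro i
    simp only [hV]
    rw [dif_pos i.isLt]
  have hT0 : T 0 = 0 := by
    rw [show (0 : ℕ) = (0 : Fin (n+1)).val from (Fin.val_zero _).symm, hTeq]
    exact ht0
  have hTn : T n = 1 := by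
    rw [show (n : ℕ) = (Fin.last n).val from (Fin.val_last _).symm, hTeq]
    exact htlast
  have hTlt : ∀ {i j : ℕ}, i < j → j ≤ n → T i < T j := by
    intro i j hij hjn
    have hi : i < n + 1 := by omega
    have hj : j < n + 1 := by omega
    simp only [hT]
    rw [dif_pos hi, dif_pos hj]
    exact hmono (Fin.mk_lt_mk.mpr hij)
  have hTle : ∀ {i j : ℕ}, i ≤ j → j ≤ n → T i ≤ T j := by
    intro i j hij hjn
    rcases eq_or_lt_of_le hij with rfl | hij'
    · exact le_rfl
    · exact (hTlt hij' hjn).le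
  have hVopen : ∀ k, IsOpen (V k) := by
    intro k
    simp only [hV]
    split_ifs
    · exact hUopen _
    · exact isOpen_univ
  have hgV : ∀ p, p < n → ⇑g '' Set.Icc (T p) (T (p + 1)) ⊆ V p := by
    intro p hp
    rw [hTcast ⟨p, hp⟩, hTsucc ⟨p, hp⟩, hVeq ⟨p, hp⟩]
    exact hgU ⟨p, hp⟩
  -- the path-component neighbourhoods
  set W : ℕ → Set X := fun k => pathComponentIn (V (k - 1) ∩ V k) (g (T k)) with hW
  have hgmem : ∀ k, 1 ≤ k → k ≤ n → g (T k) ∈ V (k - 1) ∩ V k := by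
    intro k h1 h2
    constructor
    · have hmem : g (T k) ∈ ⇑g '' Set.Icc (T (k - 1)) (T k) :=
        ⟨T k, ⟨hTle (by omega) h2, le_rfl⟩, rfl⟩
      have := hgV (k - 1) (by omega)
      rw [show k - 1 + 1 = k by omega] at this
      exact this hmem
    · by_cases hk : k < n
      · exact hgV k hk ⟨T k, ⟨le_rfl, hTle (by omega) (by omega)⟩, rfl⟩
      · simp only [hV]
        rw [dif_neg (by omega)]
        exact Set.mem_univ _
  have hWopen : ∀ k, IsOpen (W k) :=
    fun k => ((hVopen _).inter (hVopen _)).pathComponentIn _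
  have hWmem : ∀ k, 1 ≤ k → k ≤ n → g (T k) ∈ W k :=
    fun k h1 h2 => mem_pathComponentIn_self (hgmem k h1 h2)
  -- choice of refinement points
  have hmex : ∀ k, 1 ≤ k → k ≤ n →
      ∃ mm : I, T (k - 1) < mm ∧ mm < T k ∧ ⇑g '' Set.Icc mm (T k) ⊆ W k := by
    intro k h1 h2
    have hnb : (g.extend) ⁻¹' (W k) ∈ nhds ((T k : ℝ)) := by
      apply g.continuous_extend.continuousAt.preimage_mem_nhds
      rw [g.extend_extends' (T k)]
      exact (hWopen k).mem_nhds (hWmem k h1 h2)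
    have hlt : ((T (k - 1) : ℝ)) < (T k : ℝ) :=
      Subtype.coe_lt_coe.mpr (hTlt (by omega) h2)
    obtain ⟨l', hl', hsub⟩ := exists_Ioc_subset_of_mem_nhds hnb ⟨(T (k - 1) : ℝ), hlt⟩
    obtain ⟨mm, hmm1, hmm2⟩ := exists_between (max_lt hl' hlt)
    have h0T : (0 : ℝ) ≤ (T (k - 1) : ℝ) := (T (k - 1)).2.1
    have hT1 : (T k : ℝ) ≤ 1 := (T k).2.2
    have hmmI : mm ∈ I := ⟨le_trans h0T (le_trans (le_max_right _ _) hmm1.le),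
      le_trans hmm2.le hT1⟩
    refine ⟨⟨mm, hmmI⟩, ?_, ?_, ?_⟩
    · exact Subtype.coe_lt_coe.mp (lt_of_le_of_lt (le_max_right _ _) hmm1)
    · exact Subtype.coe_lt_coe.mp hmm2
    · rintro x ⟨s, hs, rfl⟩
      have hmem : (s : ℝ) ∈ Set.Ioc l' (T k : ℝ) :=
        ⟨lt_of_le_of_lt (le_max_left _ _) (lt_of_lt_of_le hmm1 (Subtype.coe_le_coe.mpr hs.1)),
          Subtype.coe_le_coe.mpr hs.2⟩
      have := hsub hmem
      rw [Set.mem_preimage] at this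
      rwa [g.extend_extends' s] at this
  set m : ℕ → I := fun k => if hk : 1 ≤ k ∧ k ≤ n then (hmex k hk.1 hk.2).choose else 0 with hm
  have hm1 : ∀ k, 1 ≤ k → k ≤ n →
      T (k - 1) < m k ∧ m k < T k ∧ ⇑g '' Set.Icc (m k) (T k) ⊆ W k := by
    intro k h1 h2
    simp only [hm]
    rw [dif_pos ⟨h1, h2⟩]
    exact (hmex k h1 h2).choose_spec
  -- the refined partition
  set t' : Fin (2 * n + 1) → I := fun j =>
    if j.val % 2 = 0 then T (j.val / 2) else m (j.val / 2 + 1) with ht'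
  have ht'eval : ∀ j : Fin (2 * n + 1),
      t' j = if j.val % 2 = 0 then T (j.val / 2) else m (j.val / 2 + 1) := fun j => rfl
  have ht'0 : t' 0 = 0 := by
    rw [ht'eval]
    rw [if_pos (show (0 : Fin (2 * n + 1)).val % 2 = 0 by simp)]
    rw [show (0 : Fin (2 * n + 1)).val / 2 = 0 by simp]
    exact hT0
  have ht'last : t' (Fin.last (2 * n)) = 1 := by
    rw [ht'eval]
    simp only [Fin.val_last]
    rw [if_pos (by omega), show 2 * n / 2 = n by omega]
    exact hTn
  have ht'mono : StrictMono t' := by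
    rw [Fin.strictMono_iff_lt_succ]
    intro i
    have hiv : i.val < 2 * n := i.isLt
    rw [ht'eval, ht'eval]
    simp only [Fin.coe_castSucc, Fin.val_succ]
    rcases Nat.even_or_odd i.val with ⟨p, hp⟩ | ⟨p, hp⟩
    · rw [if_pos (by omega), if_neg (by omega)]
      rw [show i.val / 2 = p by omega, show (i.val + 1) / 2 = p by omega]
      have := (hm1 (p + 1) (by omega) (by omega)).1
      rwa [show p + 1 - 1 = p by omega] at this
    · rw [if_neg (by omega), if_pos (by omega)]
      rw [show i.val / 2 = p by omega, show (i.val + 1) / 2 = p + 1 by omega]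
      exact (hm1 (p + 1) (by omega) (by omega)).2.1
  set U' : Fin (2 * n) → Set X := fun j =>
    if j.val % 2 = 0 then V (j.val / 2) else V (j.val / 2) ∩ W (j.val / 2 + 1) with hU'
  have hU'eval : ∀ j : Fin (2 * n),
      U' j = if j.val % 2 = 0 then V (j.val / 2) else V (j.val / 2) ∩ W (j.val / 2 + 1) :=
    fun j => rfl
  have hU'open : ∀ j, IsOpen (U' j) := by
    intro j
    rw [hU'eval]
    split_ifs
    · exact hVopen _
    · exact (hVopen _).inter (hWopen _)
  have hgU' : ∀ j : Fin (2 * n), ⇑g '' Set.Icc (t' j.castSucc) (t' j.succ) ⊆ U' j := by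
    intro j
    have hjv : j.val < 2 * n := j.isLt
    rw [ht'eval, ht'eval, hU'eval]
    simp only [Fin.coe_castSucc, Fin.val_succ]
    rcases Nat.even_or_odd j.val with ⟨p, hp⟩ | ⟨p, hp⟩
    · rw [if_pos (by omega), if_neg (by omega), if_pos (by omega)]
      rw [show j.val / 2 = p by omega, show (j.val + 1) / 2 = p by omega]
      have hmle : m (p + 1) ≤ T (p + 1) := (hm1 (p + 1) (by omega) (by omega)).2.1.le
      exact (Set.image_mono (Set.Icc_subset_Icc_right hmle)).trans (hgV p (by omega))
    · rw [if_neg (by omega), if_pos (by omega), if_neg (by omega)]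
      rw [show j.val / 2 = p by omega, show (j.val + 1) / 2 = p + 1 by omega]
      have hTm : T p ≤ m (p + 1) := by
        have := (hm1 (p + 1) (by omega) (by omega)).1
        rw [show p + 1 - 1 = p by omega] at this
        exact this.le
      apply Set.subset_inter
      · exact (Set.image_mono (Set.Icc_subset_Icc_left hTm)).trans (hgV p (by omega))
      · exact (hm1 (p + 1) (by omega) (by omega)).2.2
  -- apply the hypothesis to the refined partition
  obtain ⟨f', hf'f, hf'U'⟩ := h (2 * n) t' ht'0 ht'last ht'mono U' hU'open hgU'
  -- consequences
  have hf'V : ∀ p, p < n → ⇑f' '' Set.Icc (T p) (T (p + 1)) ⊆ V p := by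
    intro p hp
    have hTm : T p ≤ m (p + 1) := by
      have := (hm1 (p + 1) (by omega) (by omega)).1
      rw [show p + 1 - 1 = p by omega] at this
      exact this.le
    have hmT : m (p + 1) ≤ T (p + 1) := (hm1 (p + 1) (by omega) (by omega)).2.1.le
    rw [← Set.Icc_union_Icc_eq_Icc hTm hmT, Set.image_union]
    apply Set.union_subset
    · have := hf'U' ⟨2 * p, by omega⟩
      rw [ht'eval, ht'eval, hU'eval] at this
      simp only [Fin.coe_castSucc, Fin.val_succ] at this
      rw [if_pos (by omega), if_neg (by omega), if_pos (by omega),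
        show 2 * p / 2 = p by omega, show (2 * p + 1) / 2 = p by omega] at this
      exact this
    · have := hf'U' ⟨2 * p + 1, by omega⟩
      rw [ht'eval, ht'eval, hU'eval] at this
      simp only [Fin.coe_castSucc, Fin.val_succ] at this
      rw [if_neg (by omega), if_pos (by omega), if_neg (by omega),
        show (2 * p + 1) / 2 = p by omega, show (2 * p + 1 + 1) / 2 = p + 1 by omega] at this
      exact this.trans Set.inter_subset_left
  have hf'W : ∀ k, 1 ≤ k → k ≤ n → f' (T k) ∈ W k := by
    intro k h1 h2
    have := hf'U' ⟨2 * (k - 1) + 1, by omega⟩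
    rw [ht'eval, ht'eval, hU'eval] at this
    simp only [Fin.coe_castSucc, Fin.val_succ] at this
    rw [if_neg (by omega), if_pos (by omega), if_neg (by omega),
      show (2 * (k - 1) + 1) / 2 = k - 1 by omega, show (2 * (k - 1) + 1 + 1) / 2 = k by omega,
      show k - 1 + 1 = k by omega] at this
    have hmem : f' (T k) ∈ ⇑f' '' Set.Icc (m k) (T k) :=
      ⟨T k, ⟨(hm1 k h1 h2).2.1.le, le_rfl⟩, rfl⟩
    exact (this hmem).2
  -- the inductive construction
  have claim : ∀ k : ℕ, k ≤ n → ∃ γ : Path a b, γ.Homotopic f ∧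
      (∀ p, p < n → ⇑γ '' Set.Icc (T p) (T (p + 1)) ⊆ V p) ∧
      (∀ j, j ≤ n → (j ≤ k → γ (T j) = g (T j)) ∧ (k < j → γ (T j) = f' (T j))) := by
    intro k
    induction k with
    | zero =>
      intro _
      refine ⟨f', hf'f, hf'V, ?_⟩
      intro j hj
      constructor
      · intro hj0
        have : j = 0 := by omega
        subst this
        rw [hT0]
        rw [show f' 0 = a from f'.source, show g 0 = a from g.source]
      · intro _
        rfl
    | succ k ih =>
      intro hk1
      obtain ⟨γ, hγf, hγV, hγpt⟩ := ih (by omega)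
      by_cases hkn : k + 1 = n
      · refine ⟨γ, hγf, hγV, ?_⟩
        intro j hj
        refine ⟨?_, fun hjk => (hγpt j hj).2 (by omega)⟩
        intro hjk
        rcases Nat.lt_or_ge j (k + 1) with h' | h'
        · exact (hγpt j hj).1 (by omega)
        · have : j = n := by omega
          subst this
          rw [hTn]
          rw [show γ 1 = b from γ.target, show g 1 = b from g.target]
      · -- k + 1 < n : detour at T (k+1)
        have hj₀1 : 1 ≤ k + 1 := by omega
        have hγT : γ (T (k + 1)) = f' (T (k + 1)) := (hγpt (k + 1) hk1).2 (by omega)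
        have hf'Wk : f' (T (k + 1)) ∈ W (k + 1) := hf'W (k + 1) hj₀1 hk1
        have hJ : JoinedIn (V (k + 1 - 1) ∩ V (k + 1)) (g (T (k + 1))) (f' (T (k + 1))) := hf'Wk
        rw [show k + 1 - 1 = k by omega] at hJ
        obtain ⟨pth, hpth⟩ := hJ
        have hδ : Path (γ (T (k + 1))) (g (T (k + 1))) := pth.symm.cast (by rw [hγT]) rfl
        set δ : Path (γ (T (k + 1))) (g (T (k + 1))) := pth.symm.cast (by rw [hγT]) rfl with hδdef
        have hδrange : Set.range ⇑δ ⊆ V k ∩ V (k + 1) := by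
          rw [hδdef, Path.cast_coe, Path.symm_range]
          rintro x ⟨s, rfl⟩
          exact hpth s
        have hlu : m (k + 1) < T (k + 1) := (hm1 (k + 1) hj₀1 hk1).2.1
        have hur : T (k + 1) < m (k + 2) := by
          have := (hm1 (k + 2) (by omega) (by omega)).1
          rwa [show k + 2 - 1 = k + 1 by omega] at this
        have hTkm : T k ≤ m (k + 1) := by
          have h' := (hm1 (k + 1) hj₀1 hk1).1
          rw [show k + 1 - 1 = k by omega] at h'
          exact h'.le
        have hmT2 : m (k + 2) ≤ T (k + 2) := (hm1 (k + 2) (by omega) (by omega)).2.1.le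
        obtain ⟨γ', hγ'hom, hγ'u, hγ'eq, hγ'im1, hγ'im2⟩ :=
          my_detour γ (m (k + 1)) (T (k + 1)) (m (k + 2)) hlu hur δ
        refine ⟨γ', hγ'hom.trans hγf, ?_, ?_⟩
        · intro p hp
          rcases lt_trichotomy (p + 1) (k + 1) with hcase | hcase | hcase
          · rintro x ⟨s, hs, rfl⟩
            rw [hγ'eq s (Or.inl (le_trans hs.2 (le_trans (hTle (by omega) (by omega)) hTkm)))]
            exact hγV p hp ⟨s, hs, rfl⟩
          · have hpk : p = k := by omega
            subst hpk
            rw [← Set.Icc_union_Icc_eq_Icc hTkm hlu.le, Set.image_union]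
            apply Set.union_subset
            · rintro x ⟨s, hs, rfl⟩
              rw [hγ'eq s (Or.inl hs.2)]
              exact hγV p hp ⟨s, ⟨hs.1, le_trans hs.2 hlu.le⟩, rfl⟩
            · refine hγ'im1.trans (Set.union_subset ?_ ?_)
              · exact (Set.image_mono (Set.Icc_subset_Icc_left hTkm)).trans (hγV p hp)
              · exact hδrange.trans Set.inter_subset_left
          · by_cases hpk : p = k + 1
            · subst hpk
              rw [← Set.Icc_union_Icc_eq_Icc hur.le hmT2, Set.image_union]
              apply Set.union_subset
              · refine hγ'im2.trans (Set.union_subset ?_ ?_)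
                · exact (Set.image_mono (Set.Icc_subset_Icc_right hmT2)).trans
                    (hγV (k + 1) hp)
                · exact hδrange.trans Set.inter_subset_right
              · rintro x ⟨s, hs, rfl⟩
                rw [hγ'eq s (Or.inr hs.1)]
                exact hγV (k + 1) hp ⟨s, ⟨le_trans hur.le hs.1, hs.2⟩, rfl⟩
            · rintro x ⟨s, hs, rfl⟩
              have hrs : m (k + 2) ≤ s :=
                le_trans hmT2 (le_trans (hTle (by omega) (by omega)) hs.1)
              rw [hγ'eq s (Or.inr hrs)]
              exact hγV p hp ⟨s, hs, rfl⟩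
        · intro j hj
          constructor
          · intro hjk
            by_cases hjeq : j = k + 1
            · subst hjeq
              exact hγ'u
            · have hTjl : T j ≤ m (k + 1) := le_trans (hTle (by omega) (by omega)) hTkm
              rw [hγ'eq (T j) (Or.inl hTjl)]
              exact (hγpt j hj).1 (by omega)
          · intro hjk
            have hTjr : m (k + 2) ≤ T j := le_trans hmT2 (hTle (by omega) (by omega))
            rw [hγ'eq (T j) (Or.inr hTjr)]
            exact (hγpt j hj).2 (by omega)
  obtain ⟨γ, hγf, hγV, hγpt⟩ := claim n le_rfl
  refine ⟨γ, ?_, ?_, hγf⟩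
  · intro i
    have := hγV i.val i.isLt
    rwa [hTcast i, hTsucc i, hVeq i] at this
  · intro i
    have := (hγpt i.val (by omega)).1 (by omega)
    rwa [hTeq i] at this
end
end
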